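/- arXiv:1112.4813 — 7 statements merged into one kernel-verified Lean document; each statement's English description precedes it below -/
import Mathlib

section
/- (Generalized Routh theorem) Let A, B, C be three non-collinear points in the plane and x,y,z,u,v,w real numbers with (1+x)(1+y)(1+z)(1+u)(1+v)(1+w) ≠ 0 and (1+x+xv)(1+y+yw)(1+z+zu) ≠ 0. Define A_x on line BC by vector(B,A_x)=x·vector(A_x,C), similarly A_u, B_v, B_y on line CA by vector(C,B_y)=y·vector(B_y,A), and C_w, C_z on line AB by vector(A,C_z)=z·vector(C_z,B). Let P be the intersection of lines AA_x and BB_v, Q the intersection of BB_y and CC_w, R the intersection of CC_z and AA_u. Then signedArea(PQR)/signedArea(ABC) = (1 - xyw - xzv - uyz + xyz + xyzuvw)/((1+x+xv)(1+y+yw)(1+z+zu)). -/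
noncomputable def signedArea (P Q R : ℝ × ℝ) : ℝ :=
  ((Q.1 - P.1) * (R.2 - P.2) - (R.1 - P.1) * (Q.2 - P.2)) / 2

def onLine (P A B : ℝ × ℝ) : Prop := P ∈ affineSpan ℝ ({A, B} : Set (ℝ × ℝ))

lemma onLine_param {P A B : ℝ × ℝ} (h : onLine P A B) : ∃ r : ℝ, P = r • (B - A) + A := by
  have h1 := AffineSubspace.vsub_mem_direction h (left_mem_affineSpan_pair ℝ A B)
  rw [direction_affineSpan, mem_vectorSpan_pair_rev] at h1
  obtain ⟨r, hr⟩ := h1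
  refine ⟨r, ?_⟩
  have hr' : r • (B - A) = P - A := hr
  exact (sub_eq_iff_eq_add.mp hr'.symm)

lemma det_ne_of_not_collinear (A B C : ℝ × ℝ)
    (h : ¬ Collinear ℝ ({A, B, C} : Set (ℝ × ℝ))) :
    (B.1-A.1)*(C.2-A.2) - (C.1-A.1)*(B.2-A.2) ≠ 0 := by
  intro hd
  apply h
  rw [collinear_iff_of_mem (Set.mem_insert A {B, C})]
  by_cases hBA : B = A
  · refine ⟨C - A, ?_⟩
    intro p hp
    simp only [Set.mem_insert_iff, Set.mem_singleton_iff] at hp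
    rcases hp with rfl | rfl | rfl
    · exact ⟨0, by simp⟩
    · exact ⟨0, by simp [hBA]⟩
    · exact ⟨1, by simp⟩
  · refine ⟨B - A, ?_⟩
    intro p hp
    simp only [Set.mem_insert_iff, Set.mem_singleton_iff] at hp
    rcases hp with rfl | rfl | rfl
    · exact ⟨0, by simp⟩
    · exact ⟨1, by simp⟩
    · have hne : B.1 - A.1 ≠ 0 ∨ B.2 - A.2 ≠ 0 := by
        by_contra hc
        push_neg at hc
        exact hBA (Prod.ext (by linarith [hc.1]) (by linarith [hc.2]))
      rcases hne with h1 | h2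
      · refine ⟨(p.1-A.1)/(B.1-A.1), Prod.ext ?_ ?_⟩ <;>
          simp only [Prod.smul_fst, Prod.smul_snd, Prod.fst_sub, Prod.snd_sub, smul_eq_mul,
            Prod.fst_vadd, Prod.snd_vadd, vadd_eq_add, Prod.fst_add, Prod.snd_add] <;> field_simp <;> [linear_combination; linear_combination hd]
      · refine ⟨(p.2-A.2)/(B.2-A.2), Prod.ext ?_ ?_⟩ <;>
          simp only [Prod.smul_fst, Prod.smul_snd, Prod.fst_sub, Prod.snd_sub, smul_eq_mul,
            Prod.fst_vadd, Prod.snd_vadd, vadd_eq_add, Prod.fst_add, Prod.snd_add] <;> field_simp <;> [linear_combination -hd; linear_combination]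

lemma solve_pt (A B C D E P : ℝ × ℝ) (x v s t : ℝ)
    (hd : (B.1-A.1)*(C.2-A.2) - (C.1-A.1)*(B.2-A.2) ≠ 0)
    (hx : 1+x ≠ 0) (hv : 1+v ≠ 0)
    (hD : D - B = x • (C - D)) (hE : E - C = v • (A - E))
    (hsP : P = s • (D - A) + A) (htP : P = t • (E - B) + B) :
    (1+x+x*v)*(P.1-A.1) = (B.1-A.1)+x*(C.1-A.1) ∧
    (1+x+x*v)*(P.2-A.2) = (B.2-A.2)+x*(C.2-A.2) := by
  have hD1 : D.1 - B.1 = x*(C.1-D.1) := by have := congrArg Prod.fst hD; simpa using this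
  have hD2 : D.2 - B.2 = x*(C.2-D.2) := by have := congrArg Prod.snd hD; simpa using this
  have hE1 : E.1 - C.1 = v*(A.1-E.1) := by have := congrArg Prod.fst hE; simpa using this
  have hE2 : E.2 - C.2 = v*(A.2-E.2) := by have := congrArg Prod.snd hE; simpa using this
  have h1 : P.1 = s*(D.1-A.1)+A.1 := by have := congrArg Prod.fst hsP; simpa using this
  have h2 : P.2 = s*(D.2-A.2)+A.2 := by have := congrArg Prod.snd hsP; simpa using this
  have h3 : P.1 = t*(E.1-B.1)+B.1 := by have := congrArg Prod.fst htP; simpa using this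
  have h4 : P.2 = t*(E.2-B.2)+B.2 := by have := congrArg Prod.snd htP; simpa using this
  have hEq1 : (s*(1+v)+t*(1+x)*(1+v)-(1+x)*(1+v))*(B.1-A.1)
      + (s*x*(1+v)-t*(1+x))*(C.1-A.1) = 0 := by
    linear_combination (1+x)*(1+v)*h3 - (1+x)*(1+v)*h1 - s*(1+v)*hD1 + t*(1+x)*hE1
  have hEq2 : (s*(1+v)+t*(1+x)*(1+v)-(1+x)*(1+v))*(B.2-A.2)
      + (s*x*(1+v)-t*(1+x))*(C.2-A.2) = 0 := by
    linear_combination (1+x)*(1+v)*h4 - (1+x)*(1+v)*h2 - s*(1+v)*hD2 + t*(1+x)*hE2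
  have hα : s*(1+v)+t*(1+x)*(1+v)-(1+x)*(1+v) = 0 := by
    have h := mul_eq_zero.mp (show (s*(1+v)+t*(1+x)*(1+v)-(1+x)*(1+v)) *
        ((B.1-A.1)*(C.2-A.2) - (C.1-A.1)*(B.2-A.2)) = 0 by
      linear_combination (C.2-A.2)*hEq1 - (C.1-A.1)*hEq2)
    tauto
  have hβ : s*x*(1+v)-t*(1+x) = 0 := by
    have h := mul_eq_zero.mp (show (s*x*(1+v)-t*(1+x)) *
        ((B.1-A.1)*(C.2-A.2) - (C.1-A.1)*(B.2-A.2)) = 0 by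
      linear_combination (B.1-A.1)*hEq2 - (B.2-A.2)*hEq1)
    tauto
  have hs' : s*(1+x+x*v) = 1+x := by
    have key : (1+v)*(s*(1+x+x*v) - (1+x)) = 0 := by linear_combination (1+v)*hβ + hα
    have := (mul_eq_zero.mp key).resolve_left hv
    linarith
  have hD1' : (1+x)*(D.1-A.1) = (B.1-A.1)+x*(C.1-A.1) := by linear_combination hD1
  have hD2' : (1+x)*(D.2-A.2) = (B.2-A.2)+x*(C.2-A.2) := by linear_combination hD2
  constructor
  · have goal' : (1+x)*((1+x+x*v)*(P.1-A.1)) = (1+x)*((B.1-A.1)+x*(C.1-A.1)) := by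
      linear_combination ((1+x+x*v)*(1+x))*h1 + ((1+x+x*v)*s)*hD1' + ((B.1-A.1)+x*(C.1-A.1))*hs'
    exact mul_left_cancel₀ hx goal'
  · have goal' : (1+x)*((1+x+x*v)*(P.2-A.2)) = (1+x)*((B.2-A.2)+x*(C.2-A.2)) := by
      linear_combination ((1+x+x*v)*(1+x))*h2 + ((1+x+x*v)*s)*hD2' + ((B.2-A.2)+x*(C.2-A.2))*hs'
    exact mul_left_cancel₀ hx goal'

lemma area_ratio (A B C P Q R : ℝ × ℝ) (p1 p2 q1 q2 r1 r2 : ℝ)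
    (hP1 : P.1 = A.1 + p1*(B.1-A.1) + p2*(C.1-A.1)) (hP2 : P.2 = A.2 + p1*(B.2-A.2) + p2*(C.2-A.2))
    (hQ1 : Q.1 = A.1 + q1*(B.1-A.1) + q2*(C.1-A.1)) (hQ2 : Q.2 = A.2 + q1*(B.2-A.2) + q2*(C.2-A.2))
    (hR1 : R.1 = A.1 + r1*(B.1-A.1) + r2*(C.1-A.1)) (hR2 : R.2 = A.2 + r1*(B.2-A.2) + r2*(C.2-A.2)) :
    signedArea P Q R = ((q1-p1)*(r2-p2) - (r1-p1)*(q2-p2)) * signedArea A B C := by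
  simp only [signedArea, hP1, hP2, hQ1, hQ2, hR1, hR2]
  ring

set_option maxHeartbeats 1000000 in
lemma coef_identity (x y z u v w : ℝ)
    (hxv : (1:ℝ)+x+x*v ≠ 0) (hyw : (1:ℝ)+y+y*w ≠ 0) (hzu : (1:ℝ)+z+z*u ≠ 0) :
    (((1-(1+y)/(1+y+y*w))-(1/(1+x+x*v)))*((1-(1+z)/(1+z+z*u))-(x/(1+x+x*v)))
      - ((z/(1+z+z*u))-(1/(1+x+x*v)))*((1/(1+y+y*w))-(x/(1+x+x*v))))
      * ((1 + x + x * v) * (1 + y + y * w) * (1 + z + z * u))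
      = (1 - x * y * w - x * z * v - u * y * z + x * y * z + x * y * z * u * v * w) := by
  have h1 : (1-(1+y)/(1+y+y*w)) = y*w/(1+y+y*w) := by field_simp; ring
  have h2 : (1-(1+z)/(1+z+z*u)) = z*u/(1+z+z*u) := by field_simp; ring
  rw [h1, h2]
  field_simp
  ring

set_option maxHeartbeats 1600000 in
/-- Generalized Routh's theorem. -/
theorem generalized_routh (A B C Ax Au Bv By Cw Cz P Q R : ℝ × ℝ) (x y z u v w : ℝ)
    (hABC : ¬ Collinear ℝ ({A, B, C} : Set (ℝ × ℝ)))
    (hden1 : (1 + x) * (1 + y) * (1 + z) * (1 + u) * (1 + v) * (1 + w) ≠ 0)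
    (hden2 : (1 + x + x * v) * (1 + y + y * w) * (1 + z + z * u) ≠ 0)
    (hAx : Ax - B = x • (C - Ax)) (hAu : Au - B = u • (C - Au))
    (hBy : By - C = y • (A - By)) (hBv : Bv - C = v • (A - Bv))
    (hCz : Cz - A = z • (B - Cz)) (hCw : Cw - A = w • (B - Cw))
    (hP1 : onLine P A Ax) (hP2 : onLine P B Bv)
    (hQ1 : onLine Q B By) (hQ2 : onLine Q C Cw)
    (hR1 : onLine R C Cz) (hR2 : onLine R A Au) :
    signedArea P Q R / signedArea A B C =
      (1 - x * y * w - x * z * v - u * y * z + x * y * z + x * y * z * u * v * w) /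
        ((1 + x + x * v) * (1 + y + y * w) * (1 + z + z * u)) := by
  have hx : (1:ℝ)+x ≠ 0 := fun h => hden1 (by rw [show (1:ℝ)+x = 0 from h]; ring)
  have hy : (1:ℝ)+y ≠ 0 := fun h => hden1 (by rw [show (1:ℝ)+y = 0 from h]; ring)
  have hz : (1:ℝ)+z ≠ 0 := fun h => hden1 (by rw [show (1:ℝ)+z = 0 from h]; ring)
  have hu : (1:ℝ)+u ≠ 0 := fun h => hden1 (by rw [show (1:ℝ)+u = 0 from h]; ring)
  have hv : (1:ℝ)+v ≠ 0 := fun h => hden1 (by rw [show (1:ℝ)+v = 0 from h]; ring)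
  have hw : (1:ℝ)+w ≠ 0 := fun h => hden1 (by rw [show (1:ℝ)+w = 0 from h]; ring)
  have hxv : (1:ℝ)+x+x*v ≠ 0 := fun h => hden2 (by rw [show (1:ℝ)+x+x*v = 0 from h]; ring)
  have hyw : (1:ℝ)+y+y*w ≠ 0 := fun h => hden2 (by rw [show (1:ℝ)+y+y*w = 0 from h]; ring)
  have hzu : (1:ℝ)+z+z*u ≠ 0 := fun h => hden2 (by rw [show (1:ℝ)+z+z*u = 0 from h]; ring)
  have hd : (B.1-A.1)*(C.2-A.2) - (C.1-A.1)*(B.2-A.2) ≠ 0 := det_ne_of_not_collinear A B C hABC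
  have hd2 : (C.1-B.1)*(A.2-B.2) - (A.1-B.1)*(C.2-B.2) ≠ 0 := fun h => hd (by linear_combination h)
  have hd3 : (A.1-C.1)*(B.2-C.2) - (B.1-C.1)*(A.2-C.2) ≠ 0 := fun h => hd (by linear_combination h)
  obtain ⟨s1, hs1⟩ := onLine_param hP1
  obtain ⟨t1, ht1⟩ := onLine_param hP2
  obtain ⟨s2, hs2⟩ := onLine_param hQ1
  obtain ⟨t2, ht2⟩ := onLine_param hQ2
  obtain ⟨s3, hs3⟩ := onLine_param hR1
  obtain ⟨t3, ht3⟩ := onLine_param hR2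
  obtain ⟨hPc1, hPc2⟩ := solve_pt A B C Ax Bv P x v s1 t1 hd hx hv hAx hBv hs1 ht1
  obtain ⟨hQc1, hQc2⟩ := solve_pt B C A By Cw Q y w s2 t2 hd2 hy hw hBy hCw hs2 ht2
  obtain ⟨hRc1, hRc2⟩ := solve_pt C A B Cz Au R z u s3 t3 hd3 hz hu hCz hAu hs3 ht3
  have hS : signedArea A B C ≠ 0 := by
    unfold signedArea
    exact div_ne_zero hd two_ne_zero
  rw [div_eq_div_iff hS hden2]
  have eP1 : P.1 = A.1 + (1/(1+x+x*v))*(B.1-A.1) + (x/(1+x+x*v))*(C.1-A.1) := by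
    field_simp; linear_combination hPc1
  have eP2 : P.2 = A.2 + (1/(1+x+x*v))*(B.2-A.2) + (x/(1+x+x*v))*(C.2-A.2) := by
    field_simp; linear_combination hPc2
  have eQ1 : Q.1 = A.1 + (1-(1+y)/(1+y+y*w))*(B.1-A.1) + (1/(1+y+y*w))*(C.1-A.1) := by
    field_simp; linear_combination hQc1
  have eQ2 : Q.2 = A.2 + (1-(1+y)/(1+y+y*w))*(B.2-A.2) + (1/(1+y+y*w))*(C.2-A.2) := by
    field_simp; linear_combination hQc2
  have eR1 : R.1 = A.1 + (z/(1+z+z*u))*(B.1-A.1) + (1-(1+z)/(1+z+z*u))*(C.1-A.1) := by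
    field_simp; linear_combination hRc1
  have eR2 : R.2 = A.2 + (z/(1+z+z*u))*(B.2-A.2) + (1-(1+z)/(1+z+z*u))*(C.2-A.2) := by
    field_simp; linear_combination hRc2
  rw [area_ratio A B C P Q R _ _ _ _ _ _ eP1 eP2 eQ1 eQ2 eR1 eR2]
  have hcoef := coef_identity x y z u v w hxv hyw hzu
  linear_combination signedArea A B C * hcoef
end

section
/- (Routh's first expression / cevial triangle) Let A, B, C be non-collinear points in the plane and x,y,z real numbers with (1+x)(1+y)(1+z) ≠ 0. Let A_x on line BC satisfy vector(B,A_x)=x·vector(A_x,C), B_y on line CA satisfy vector(C,B_y)=y·vector(B_y,A), C_z on line AB satisfy vector(A,C_z)=z·vector(C_z,B). Then signedArea(A_x B_y C_z)/signedArea(ABC) = (xyz+1)/((1+x)(1+y)(1+z)). -/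
lemma collinear_of_det_zero (A B C : ℝ × ℝ)
    (h : (B.1 - A.1) * (C.2 - A.2) - (C.1 - A.1) * (B.2 - A.2) = 0) :
    Collinear ℝ ({A, B, C} : Set (ℝ × ℝ)) := by
  have hmem : A ∈ ({A, B, C} : Set (ℝ × ℝ)) := by simp
  rw [collinear_iff_of_mem hmem]
  by_cases hAB : B = A
  · refine ⟨C - A, ?_⟩
    intro p hp
    rcases hp with rfl | rfl | rfl
    · exact ⟨0, by simp⟩
    · exact ⟨0, by simp [hAB]⟩
    · exact ⟨1, by simp⟩
  · refine ⟨B - A, ?_⟩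
    intro p hp
    have hv : B.1 ≠ A.1 ∨ B.2 ≠ A.2 := by
      by_contra hc
      push_neg at hc
      exact hAB (Prod.ext hc.1 hc.2)
    rcases hp with rfl | rfl | rfl
    · exact ⟨0, by simp⟩
    · exact ⟨1, by simp⟩
    · rcases hv with hv | hv
      · refine ⟨(p.1 - A.1) / (B.1 - A.1), ?_⟩
        have h1 : B.1 - A.1 ≠ 0 := sub_ne_zero.mpr hv
        apply Prod.ext <;> simp [Prod.smul_def, smul_eq_mul]
        · field_simp
          ring
        · field_simp
          linear_combination h
      · refine ⟨(p.2 - A.2) / (B.2 - A.2), ?_⟩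
        have h1 : B.2 - A.2 ≠ 0 := sub_ne_zero.mpr hv
        apply Prod.ext <;> simp [Prod.smul_def, smul_eq_mul]
        · field_simp
          linear_combination -h
        · field_simp
          ring

/-- Routh's first expression: the cevial triangle. -/
theorem cevial_triangle_area (A B C Ax By Cz : ℝ × ℝ) (x y z : ℝ)
    (hABC : ¬ Collinear ℝ ({A, B, C} : Set (ℝ × ℝ)))
    (hden : (1 + x) * (1 + y) * (1 + z) ≠ 0)
    (hAx : Ax - B = x • (C - Ax))
    (hBy : By - C = y • (A - By))
    (hCz : Cz - A = z • (B - Cz)) :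
    signedArea Ax By Cz / signedArea A B C =
      (x * y * z + 1) / ((1 + x) * (1 + y) * (1 + z)) := by
  have hx : (1 + x) ≠ 0 := fun h => hden (by rw [h]; ring)
  have hy : (1 + y) ≠ 0 := fun h => hden (by rw [h]; ring)
  have hz : (1 + z) ≠ 0 := fun h => hden (by rw [h]; ring)
  have hAx1 := congrArg Prod.fst hAx
  have hAx2 := congrArg Prod.snd hAx
  have hBy1 := congrArg Prod.fst hBy
  have hBy2 := congrArg Prod.snd hBy
  have hCz1 := congrArg Prod.fst hCz
  have hCz2 := congrArg Prod.snd hCz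
  simp only [Prod.fst_sub, Prod.snd_sub, Prod.smul_fst, Prod.smul_snd,
    smul_eq_mul] at hAx1 hAx2 hBy1 hBy2 hCz1 hCz2
  have eAx1 : Ax.1 = (B.1 + x * C.1) / (1 + x) := by
    rw [eq_div_iff hx]; linear_combination hAx1
  have eAx2 : Ax.2 = (B.2 + x * C.2) / (1 + x) := by
    rw [eq_div_iff hx]; linear_combination hAx2
  have eBy1 : By.1 = (C.1 + y * A.1) / (1 + y) := by
    rw [eq_div_iff hy]; linear_combination hBy1
  have eBy2 : By.2 = (C.2 + y * A.2) / (1 + y) := by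
    rw [eq_div_iff hy]; linear_combination hBy2
  have eCz1 : Cz.1 = (A.1 + z * B.1) / (1 + z) := by
    rw [eq_div_iff hz]; linear_combination hCz1
  have eCz2 : Cz.2 = (A.2 + z * B.2) / (1 + z) := by
    rw [eq_div_iff hz]; linear_combination hCz2
  have hsa : signedArea A B C ≠ 0 := by
    intro h
    apply hABC
    apply collinear_of_det_zero
    have := h
    unfold signedArea at this
    field_simp at this
    linarith
  unfold signedArea at hsa ⊢
  rw [div_eq_div_iff hsa hden, eAx1, eAx2, eBy1, eBy2, eCz1, eCz2]
  field_simp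
  ring
end

section
/- (Menelaus) Let A, B, C be non-collinear points and x,y,z real numbers with (1+x)(1+y)(1+z) ≠ 0. With A_x, B_y, C_z defined by vector(B,A_x)=x·vector(A_x,C), vector(C,B_y)=y·vector(B_y,A), vector(A,C_z)=z·vector(C_z,B), the points A_x, B_y, C_z are collinear if and only if xyz = -1. -/
lemma cross_collinear (p q r : ℝ × ℝ) :
    Collinear ℝ ({p, q, r} : Set (ℝ × ℝ)) ↔
      (q.1 - p.1) * (r.2 - p.2) - (q.2 - p.2) * (r.1 - p.1) = 0 := by
  rw [collinear_iff_of_mem (Set.mem_insert p _)]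
  constructor
  · rintro ⟨v, hv⟩
    obtain ⟨s, hs⟩ := hv q (by simp)
    obtain ⟨t, ht⟩ := hv r (by simp)
    have hq1 : q.1 = s * v.1 + p.1 := by rw [hs]; rfl
    have hq2 : q.2 = s * v.2 + p.2 := by rw [hs]; rfl
    have hr1 : r.1 = t * v.1 + p.1 := by rw [ht]; rfl
    have hr2 : r.2 = t * v.2 + p.2 := by rw [ht]; rfl
    rw [hq1, hq2, hr1, hr2]; ring
  · intro h
    by_cases hqp : q = p
    · refine ⟨r - p, ?_⟩
      rintro w (rfl | rfl | rfl)
      · exact ⟨0, by simp⟩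
      · exact ⟨0, by simp [hqp]⟩
      · exact ⟨1, by ext <;> simp⟩
    · refine ⟨q - p, ?_⟩
      rintro w (rfl | rfl | rfl)
      · exact ⟨0, by simp⟩
      · exact ⟨1, by ext <;> simp⟩
      · by_cases h1 : q.1 - p.1 ≠ 0
        · refine ⟨(w.1 - p.1) / (q.1 - p.1), ?_⟩
          have h2 : w.2 - p.2 = (w.1 - p.1) / (q.1 - p.1) * (q.2 - p.2) := by
            field_simp
            linear_combination h
          have e1 : (w.1 - p.1) / (q.1 - p.1) * (q.1 - p.1) = w.1 - p.1 :=
            div_mul_cancel₀ _ h1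
          ext
          · show w.1 = (w.1 - p.1) / (q.1 - p.1) * (q.1 - p.1) + p.1
            rw [e1]; ring
          · show w.2 = (w.1 - p.1) / (q.1 - p.1) * (q.2 - p.2) + p.2
            linarith [h2]
        · push_neg at h1
          have h2 : q.2 - p.2 ≠ 0 := by
            intro h2
            exact hqp (by ext <;> [skip; skip] <;> linarith)
          refine ⟨(w.2 - p.2) / (q.2 - p.2), ?_⟩
          have h3 : w.1 - p.1 = (w.2 - p.2) / (q.2 - p.2) * (q.1 - p.1) := by
            field_simp
            linear_combination -h
          ext
          · show w.1 = (w.2 - p.2) / (q.2 - p.2) * (q.1 - p.1) + p.1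
            linarith [h3]
          · show w.2 = (w.2 - p.2) / (q.2 - p.2) * (q.2 - p.2) + p.2
            rw [div_mul_cancel₀ _ h2]; ring

/-- Menelaus' theorem. -/
theorem menelaus (A B C Ax By Cz : ℝ × ℝ) (x y z : ℝ)
    (hABC : ¬ Collinear ℝ ({A, B, C} : Set (ℝ × ℝ)))
    (hden : (1 + x) * (1 + y) * (1 + z) ≠ 0)
    (hAx : Ax - B = x • (C - Ax))
    (hBy : By - C = y • (A - By))
    (hCz : Cz - A = z • (B - Cz)) :
    Collinear ℝ ({Ax, By, Cz} : Set (ℝ × ℝ)) ↔ x * y * z = -1 := by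
  have hx : (1 + x) ≠ 0 := fun h => hden (by rw [h]; ring)
  have hy : (1 + y) ≠ 0 := fun h => hden (by rw [h]; ring)
  have hz : (1 + z) ≠ 0 := fun h => hden (by rw [h]; ring)
  rw [cross_collinear] at hABC ⊢
  have hAx1 : Ax.1 = (B.1 + x * C.1) / (1 + x) := by
    have h := congrArg Prod.fst hAx
    simp only [Prod.fst_sub, Prod.smul_fst, smul_eq_mul] at h
    field_simp; linarith
  have hAx2 : Ax.2 = (B.2 + x * C.2) / (1 + x) := by
    have h := congrArg Prod.snd hAx
    simp only [Prod.snd_sub, Prod.smul_snd, smul_eq_mul] at h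
    field_simp; linarith
  have hBy1 : By.1 = (C.1 + y * A.1) / (1 + y) := by
    have h := congrArg Prod.fst hBy
    simp only [Prod.fst_sub, Prod.smul_fst, smul_eq_mul] at h
    field_simp; linarith
  have hBy2 : By.2 = (C.2 + y * A.2) / (1 + y) := by
    have h := congrArg Prod.snd hBy
    simp only [Prod.snd_sub, Prod.smul_snd, smul_eq_mul] at h
    field_simp; linarith
  have hCz1 : Cz.1 = (A.1 + z * B.1) / (1 + z) := by
    have h := congrArg Prod.fst hCz
    simp only [Prod.fst_sub, Prod.smul_fst, smul_eq_mul] at h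
    field_simp; linarith
  have hCz2 : Cz.2 = (A.2 + z * B.2) / (1 + z) := by
    have h := congrArg Prod.snd hCz
    simp only [Prod.snd_sub, Prod.smul_snd, smul_eq_mul] at h
    field_simp; linarith
  rw [hAx1, hAx2, hBy1, hBy2, hCz1, hCz2]
  have key : ((C.1 + y * A.1) / (1 + y) - (B.1 + x * C.1) / (1 + x)) *
      ((A.2 + z * B.2) / (1 + z) - (B.2 + x * C.2) / (1 + x)) -
      ((C.2 + y * A.2) / (1 + y) - (B.2 + x * C.2) / (1 + x)) *
      ((A.1 + z * B.1) / (1 + z) - (B.1 + x * C.1) / (1 + x)) =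
      (x * y * z + 1) *
        ((B.1 - A.1) * (C.2 - A.2) - (B.2 - A.2) * (C.1 - A.1)) /
        ((1 + x) * (1 + y) * (1 + z)) := by
    field_simp
    ring
  rw [key, div_eq_zero_iff]
  constructor
  · rintro (h | h)
    · rcases mul_eq_zero.mp h with h | h
      · linarith
      · exact absurd h hABC
    · exact absurd h hden
  · intro h
    left
    have h1 : x * y * z + 1 = 0 := by linarith
    rw [h1]; ring
end

section
/- (Ceva) Let A, B, C be non-collinear points and x,y,z real numbers with (1+x+xy)(1+y+yz)(1+z+zx) ≠ 0 and (1+x)(1+y)(1+z) ≠ 0. With A_x, B_y, C_z defined by vector(B,A_x)=x·vector(A_x,C), vector(C,B_y)=y·vector(B_y,A), vector(A,C_z)=z·vector(C_z,B), the three cevians AA_x, BB_y, CC_z are concurrent (pass through a common point) if and only if xyz = 1. -/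
lemma onLine_iff (X P Q : ℝ × ℝ) : onLine X P Q ↔ ∃ t : ℝ, X = t • (Q - P) + P := by
  unfold onLine
  constructor
  · intro h
    have h' : (X - P) +ᵥ P ∈ line[ℝ, P, Q] := by simpa using h
    obtain ⟨r, hr⟩ := vadd_left_mem_affineSpan_pair.mp h'
    exact ⟨r, by simp at hr; rw [hr]; abel⟩
  · rintro ⟨t, rfl⟩
    simpa using smul_vsub_vadd_mem_affineSpan_pair t P Q

lemma indep {A B C : ℝ × ℝ} (h : ¬ Collinear ℝ ({A, B, C} : Set (ℝ × ℝ)))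
    {a b : ℝ} (hab : a • (B - A) + b • (C - A) = 0) : a = 0 ∧ b = 0 := by
  by_contra hc
  apply h
  rw [not_and_or] at hc
  by_cases hb : b = 0
  · subst hb
    have ha : a ≠ 0 := by tauto
    have hBA : B = A := by
      have h0 : a • (B - A) = 0 := by simpa using hab
      have := (smul_eq_zero.mp h0).resolve_left ha
      simpa [sub_eq_zero] using this
    subst hBA
    have hs : ({B, B, C} : Set (ℝ × ℝ)) = {B, C} := by simp
    rw [hs]
    exact collinear_pair ℝ B C
  · have h2 : b • (C - A) = (-a) • (B - A) := by
      linear_combination (norm := module) hab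
    have h3 : C - A = (b⁻¹ * (-a)) • (B - A) := by
      have := congrArg (fun v : ℝ × ℝ => b⁻¹ • v) h2
      simpa [smul_smul, inv_mul_cancel₀ hb] using this
    rw [collinear_iff_exists_forall_eq_smul_vadd]
    refine ⟨A, B - A, ?_⟩
    intro p hp
    rcases hp with rfl | rfl | hp
    · exact ⟨0, by simp⟩
    · exact ⟨1, by simp⟩
    · rw [Set.mem_singleton_iff] at hp
      subst hp
      refine ⟨b⁻¹ * (-a), ?_⟩
      rw [vadd_eq_add, ← h3]
      abel

/-- Ceva's theorem. -/
theorem ceva (A B C Ax By Cz : ℝ × ℝ) (x y z : ℝ)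
    (hABC : ¬ Collinear ℝ ({A, B, C} : Set (ℝ × ℝ)))
    (hden2 : (1 + x + x * y) * (1 + y + y * z) * (1 + z + z * x) ≠ 0)
    (hden1 : (1 + x) * (1 + y) * (1 + z) ≠ 0)
    (hAx : Ax - B = x • (C - Ax))
    (hBy : By - C = y • (A - By))
    (hCz : Cz - A = z • (B - Cz)) :
    (∃ X : ℝ × ℝ, onLine X A Ax ∧ onLine X B By ∧ onLine X C Cz) ↔ x * y * z = 1 := by
  have h1x : (1 + x) ≠ 0 := fun h => hden1 (by rw [h]; ring)
  have h1y : (1 + y) ≠ 0 := fun h => hden1 (by rw [h]; ring)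
  have h1z : (1 + z) ≠ 0 := fun h => hden1 (by rw [h]; ring)
  have hT2 : (1 + x + x * y) ≠ 0 := fun h => hden2 (by rw [h]; ring)
  have d1 : (1 + x) • (Ax - A) = (B - A) + x • (C - A) := by
    linear_combination (norm := module) hAx
  have d2 : (1 + y) • (By - B) = (C - A) - (1 + y) • (B - A) := by
    linear_combination (norm := module) hBy
  have d3 : (1 + z) • (Cz - C) = z • (B - A) - (1 + z) • (C - A) := by
    linear_combination (norm := module) hCz
  constructor
  · rintro ⟨X, hX1, hX2, hX3⟩
    obtain ⟨t, e1⟩ := (onLine_iff X A Ax).mp hX1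
    obtain ⟨s, e2⟩ := (onLine_iff X B By).mp hX2
    obtain ⟨r, e3⟩ := (onLine_iff X C Cz).mp hX3
    have key12 : (t * (1 + y) - (1 + x) * (1 + y) * (1 - s)) • (B - A)
        + (t * x * (1 + y) - s * (1 + x)) • (C - A) = 0 := by
      linear_combination (norm := module) ((1+x)*(1+y)) • e2 - ((1+x)*(1+y)) • e1
        - ((1+y)*t) • d1 + ((1+x)*s) • d2
    have key13 : (t * (1 + z) - r * z * (1 + x)) • (B - A)
        + (t * x * (1 + z) - (1 + x) * (1 + z) * (1 - r)) • (C - A) = 0 := by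
      linear_combination (norm := module) ((1+x)*(1+z)) • e3 - ((1+x)*(1+z)) • e1
        - ((1+z)*t) • d1 + ((1+x)*r) • d3
    obtain ⟨E1, E2⟩ := indep hABC key12
    obtain ⟨E3, E4⟩ := indep hABC key13
    have ht : t = (1 + x) * (1 - s) := by
      apply mul_right_cancel₀ h1y
      linear_combination E1
    have hs1 : x * (1 + y) * (1 - s) = s := by
      apply mul_left_cancel₀ h1x
      linear_combination E2 - (x * (1 + y)) * ht
    have hr1 : (1 - s) * (1 + z) = r * z := by
      apply mul_left_cancel₀ h1x
      linear_combination E3 - (1 + z) * ht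
    have hr2 : x * (1 - s) = 1 - r := by
      apply mul_left_cancel₀ (mul_ne_zero h1x h1z)
      linear_combination E4 - (x * (1 + z)) * ht
    have hw1 : (1 - s) * (1 + x + x * y) = 1 := by linear_combination hs1
    have hw2 : (1 - s) * (1 + z + x * z) = z := by linear_combination hr1 + z * hr2
    linear_combination (1 + z + x * z) * hw1 - (1 + x + x * y) * hw2
  · intro hxyz
    set T : ℝ := (1 + x + x * y)⁻¹ with hTdef
    have hTm : T * (1 + x + x * y) = 1 := inv_mul_cancel₀ hT2
    refine ⟨T • ((B - A) + x • (C - A)) + A, ?_, ?_, ?_⟩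
    · refine (onLine_iff _ _ _).mpr ⟨T * (1 + x), ?_⟩
      rw [mul_smul, d1]
    · refine (onLine_iff _ _ _).mpr ⟨T * x * (1 + y), ?_⟩
      rw [show T * x * (1 + y) = (T * x) * (1 + y) by ring, mul_smul, d2]
      linear_combination (norm := module) hTm • (B - A)
    · refine (onLine_iff _ _ _).mpr ⟨T * (x * y) * (1 + z), ?_⟩
      rw [show T * (x * y) * (1 + z) = (T * (x * y)) * (1 + z) by ring, mul_smul, d3]
      have hc1 : T = T * (x * y) * z := by linear_combination (-T) * hxyz
      have hc2 : T * x + T * (x * y) * (1 + z) = 1 := by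
        linear_combination hTm + T * hxyz
      linear_combination (norm := module) hc1 • (B - A) + hc2 • (C - A)
end

section
/- (Feynman's one-seventh triangle) Let A, B, C be non-collinear points and set x=y=z=2 in Routh's configuration: A_2 on BC with vector(B,A_2)=2·vector(A_2,C), B_2 on CA with vector(C,B_2)=2·vector(B_2,A), C_2 on AB with vector(A,C_2)=2·vector(C_2,B). Let P = AA_2 ∩ BB_2, Q = BB_2 ∩ CC_2, R = CC_2 ∩ AA_2. Then the area of triangle PQR is 1/7 of the area of triangle ABC. -/
lemma onLine_ex {P A B : ℝ × ℝ} (h : onLine P A B) : ∃ r : ℝ, P = A + r • (B - A) := by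
  have h' : (P - A) +ᵥ A ∈ line[ℝ, A, B] := by
    simpa [vadd_eq_add, sub_add_cancel] using (show P ∈ line[ℝ, A, B] from h)
  obtain ⟨r, hr⟩ := vadd_left_mem_affineSpan_pair.mp h'
  refine ⟨r, ?_⟩
  rw [vsub_eq_sub] at hr
  rw [hr]; abel

lemma det_ne_zero_of_not_collinear {A B C : ℝ × ℝ}
    (hABC : ¬ Collinear ℝ ({A, B, C} : Set (ℝ × ℝ))) :
    (B.1 - A.1) * (C.2 - A.2) - (C.1 - A.1) * (B.2 - A.2) ≠ 0 := by
  intro hdet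
  apply hABC
  rw [collinear_iff_of_mem (Set.mem_insert A _)]
  by_cases hu : B = A
  · refine ⟨C - A, ?_⟩
    have hA : ∃ r : ℝ, A = r • (C - A) +ᵥ A := ⟨0, by simp⟩
    have hB : ∃ r : ℝ, B = r • (C - A) +ᵥ A := ⟨0, by simp [hu]⟩
    have hC : ∃ r : ℝ, C = r • (C - A) +ᵥ A := ⟨1, by simp⟩
    rintro p (rfl | rfl | rfl) <;> first | exact hA | exact hB | exact hC
  · refine ⟨B - A, ?_⟩
    have hA : ∃ r : ℝ, A = r • (B - A) +ᵥ A := ⟨0, by simp⟩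
    have hB : ∃ r : ℝ, B = r • (B - A) +ᵥ A := ⟨1, by simp⟩
    have hC : ∃ r : ℝ, C = r • (B - A) +ᵥ A := by
      by_cases h1 : B.1 - A.1 ≠ 0
      · refine ⟨(C.1 - A.1) / (B.1 - A.1), Prod.ext ?_ ?_⟩ <;>
          simp only [vadd_eq_add, Prod.smul_fst, Prod.smul_snd, Prod.fst_add, Prod.snd_add,
            Prod.fst_sub, Prod.snd_sub, smul_eq_mul] <;> field_simp <;> nlinarith [hdet]
      · push_neg at h1
        have h2 : B.2 - A.2 ≠ 0 := by
          intro h2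
          exact hu (Prod.ext (by linarith) (by linarith))
        have h3 : C.1 - A.1 = 0 := by
          have h4 : (C.1 - A.1) * (B.2 - A.2) = 0 := by
            linear_combination (C.2 - A.2) * h1 - hdet
          rcases mul_eq_zero.mp h4 with h | h
          · exact h
          · exact absurd h h2
        refine ⟨(C.2 - A.2) / (B.2 - A.2), Prod.ext ?_ ?_⟩ <;>
          simp only [vadd_eq_add, Prod.smul_fst, Prod.smul_snd, Prod.fst_add, Prod.snd_add,
            Prod.fst_sub, Prod.snd_sub, smul_eq_mul]
        · rw [h1]; simp; linarith
        · field_simp; ring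
    rintro p (rfl | rfl | rfl) <;> first | exact hA | exact hB | exact hC

lemma inter_pt {A B C P : ℝ × ℝ} {s t : ℝ}
    (hd : (B.1 - A.1) * (C.2 - A.2) - (C.1 - A.1) * (B.2 - A.2) ≠ 0)
    (h1 : P.1 = A.1 + s * ((B.1 + 2*C.1)/3 - A.1))
    (h2 : P.2 = A.2 + s * ((B.2 + 2*C.2)/3 - A.2))
    (h3 : P.1 = B.1 + t * ((C.1 + 2*A.1)/3 - B.1))
    (h4 : P.2 = B.2 + t * ((C.2 + 2*A.2)/3 - B.2)) :
    P.1 = (4*A.1 + B.1 + 2*C.1)/7 ∧ P.2 = (4*A.2 + B.2 + 2*C.2)/7 := by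
  set d : ℝ := (B.1 - A.1) * (C.2 - A.2) - (C.1 - A.1) * (B.2 - A.2) with hdef
  have hEq1 : A.1 + s * ((B.1 + 2*C.1)/3 - A.1) = B.1 + t * ((C.1 + 2*A.1)/3 - B.1) := by
    rw [← h1, ← h3]
  have hEq2 : A.2 + s * ((B.2 + 2*C.2)/3 - A.2) = B.2 + t * ((C.2 + 2*A.2)/3 - B.2) := by
    rw [← h2, ← h4]
  have hs7 : (7 * d) * s = (7 * d) * (3/7) := by
    rw [hdef]
    linear_combination (3*(C.2 - A.2 - 3*(B.2 - A.2))) * hEq1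
      - (3*(C.1 - A.1 - 3*(B.1 - A.1))) * hEq2
  have h7 : (7 : ℝ) * d ≠ 0 := mul_ne_zero (by norm_num) hd
  have hs : s = 3/7 := mul_left_cancel₀ h7 hs7
  subst hs
  constructor
  · rw [h1]; ring
  · rw [h2]; ring

/-- Feynman's one-seventh triangle. -/
theorem feynman_one_seventh (A B C Ax By Cz P Q R : ℝ × ℝ)
    (hABC : ¬ Collinear ℝ ({A, B, C} : Set (ℝ × ℝ)))
    (hAx : Ax - B = (2 : ℝ) • (C - Ax))
    (hBy : By - C = (2 : ℝ) • (A - By))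
    (hCz : Cz - A = (2 : ℝ) • (B - Cz))
    (hP1 : onLine P A Ax) (hP2 : onLine P B By)
    (hQ1 : onLine Q B By) (hQ2 : onLine Q C Cz)
    (hR1 : onLine R C Cz) (hR2 : onLine R A Ax) :
    |signedArea P Q R| = (1/7 : ℝ) * |signedArea A B C| := by
  have hd : (B.1 - A.1) * (C.2 - A.2) - (C.1 - A.1) * (B.2 - A.2) ≠ 0 :=
    det_ne_zero_of_not_collinear hABC
  have hd2 : (C.1 - B.1) * (A.2 - B.2) - (A.1 - B.1) * (C.2 - B.2) ≠ 0 := by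
    intro h; exact hd (by linear_combination h)
  have hd3 : (A.1 - C.1) * (B.2 - C.2) - (B.1 - C.1) * (A.2 - C.2) ≠ 0 := by
    intro h; exact hd (by linear_combination h)
  have hAx1 : Ax.1 = (B.1 + 2*C.1)/3 := by
    have := congrArg Prod.fst hAx; simp [Prod.smul_def] at this; linarith
  have hAx2 : Ax.2 = (B.2 + 2*C.2)/3 := by
    have := congrArg Prod.snd hAx; simp [Prod.smul_def] at this; linarith
  have hBy1 : By.1 = (C.1 + 2*A.1)/3 := by
    have := congrArg Prod.fst hBy; simp [Prod.smul_def] at this; linarith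
  have hBy2 : By.2 = (C.2 + 2*A.2)/3 := by
    have := congrArg Prod.snd hBy; simp [Prod.smul_def] at this; linarith
  have hCz1 : Cz.1 = (A.1 + 2*B.1)/3 := by
    have := congrArg Prod.fst hCz; simp [Prod.smul_def] at this; linarith
  have hCz2 : Cz.2 = (A.2 + 2*B.2)/3 := by
    have := congrArg Prod.snd hCz; simp [Prod.smul_def] at this; linarith
  obtain ⟨s, hs⟩ := onLine_ex hP1
  obtain ⟨t, ht⟩ := onLine_ex hP2
  obtain ⟨s', hs'⟩ := onLine_ex hQ1
  obtain ⟨t', ht'⟩ := onLine_ex hQ2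
  obtain ⟨s'', hs''⟩ := onLine_ex hR1
  obtain ⟨t'', ht''⟩ := onLine_ex hR2
  have comp : ∀ {X Y Z : ℝ × ℝ} {r : ℝ}, X = Y + r • (Z - Y) →
      X.1 = Y.1 + r * (Z.1 - Y.1) ∧ X.2 = Y.2 + r * (Z.2 - Y.2) := by
    intro X Y Z r h
    constructor
    · have := congrArg Prod.fst h; simpa [Prod.smul_def] using this
    · have := congrArg Prod.snd h; simpa [Prod.smul_def] using this
  obtain ⟨hsa, hsb⟩ := comp hs
  obtain ⟨hta, htb⟩ := comp ht
  obtain ⟨hsa', hsb'⟩ := comp hs'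
  obtain ⟨hta', htb'⟩ := comp ht'
  obtain ⟨hsa'', hsb''⟩ := comp hs''
  obtain ⟨hta'', htb''⟩ := comp ht''
  rw [hAx1] at hsa hta''; rw [hAx2] at hsb htb''
  rw [hBy1] at hta hsa'; rw [hBy2] at htb hsb'
  rw [hCz1] at hta' hsa''; rw [hCz2] at htb' hsb''
  obtain ⟨hP₁, hP₂⟩ := inter_pt hd hsa hsb hta htb
  obtain ⟨hQ₁, hQ₂⟩ := inter_pt hd2 hsa' hsb' hta' htb'
  obtain ⟨hR₁, hR₂⟩ := inter_pt hd3 hsa'' hsb'' hta'' htb''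
  have harea : signedArea P Q R = (1/7) * signedArea A B C := by
    unfold signedArea
    rw [hP₁, hP₂, hQ₁, hQ₂, hR₁, hR₂]
    ring
  rw [harea, abs_mul]
  norm_num
end

section
/- In the generalized Routh configuration with u=v=w=4 and x=y=z=1/2, the triangle PQR of intersection points has area equal to 1/7 of the area of triangle ABC. -/
lemma onLine_exists {P X Y : ℝ × ℝ} (h : onLine P X Y) :
    ∃ t : ℝ, P = X + t • (Y - X) := by
  unfold onLine at h
  have h' : (P - X) +ᵥ X ∈ affineSpan ℝ ({X, Y} : Set (ℝ × ℝ)) := by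
    simpa [vadd_eq_add, sub_add_cancel] using h
  obtain ⟨r, hr⟩ := vadd_left_mem_affineSpan_pair.mp h'
  refine ⟨r, ?_⟩
  have : r • (Y - X) = P - X := by simpa [vsub_eq_sub] using hr
  rw [this]; abel

lemma indep_aux {a b c d α β : ℝ} (h : a * d - c * b ≠ 0)
    (h1 : α * a + β * c = 0) (h2 : α * b + β * d = 0) : α = 0 ∧ β = 0 := by
  constructor
  · have : α * (a * d - c * b) = 0 := by linear_combination d * h1 - c * h2
    exact (mul_eq_zero.mp this).resolve_right h
  · have : β * (a * d - c * b) = 0 := by linear_combination a * h2 - b * h1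
    exact (mul_eq_zero.mp this).resolve_right h

lemma cross_ne {A B C : ℝ × ℝ} (h : ¬ Collinear ℝ ({A, B, C} : Set (ℝ × ℝ))) :
    (B.1 - A.1) * (C.2 - A.2) - (C.1 - A.1) * (B.2 - A.2) ≠ 0 := by
  intro hc
  apply h
  rw [collinear_iff_exists_forall_eq_smul_vadd]
  by_cases hb : B.1 - A.1 = 0 ∧ B.2 - A.2 = 0
  · refine ⟨A, C - A, fun p hp => ?_⟩
    simp only [Set.mem_insert_iff, Set.mem_singleton_iff] at hp
    rcases hp with h' | h' | h'
    · exact ⟨0, by simp [h']⟩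
    · refine ⟨0, ?_⟩
      rw [h']
      have : B = A := Prod.ext (by linarith [hb.1]) (by linarith [hb.2])
      simp [this]
    · refine ⟨1, ?_⟩
      rw [h']
      apply Prod.ext <;> simp [vadd_eq_add]
  · refine ⟨A, B - A, fun p hp => ?_⟩
    simp only [Set.mem_insert_iff, Set.mem_singleton_iff] at hp
    rcases hp with h' | h' | h'
    · exact ⟨0, by simp [h']⟩
    · refine ⟨1, ?_⟩
      rw [h']
      apply Prod.ext <;> simp [vadd_eq_add]
    · by_cases h1 : B.1 - A.1 = 0
      · have h2 : B.2 - A.2 ≠ 0 := fun h2 => hb ⟨h1, h2⟩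
        have hC1 : C.1 - A.1 = 0 := by
          have : (C.1 - A.1) * (B.2 - A.2) = 0 := by
            linear_combination (C.2 - A.2) * h1 - hc
          exact (mul_eq_zero.mp this).resolve_right h2
        refine ⟨(C.2 - A.2) / (B.2 - A.2), ?_⟩
        rw [h']
        apply Prod.ext
        · simp only [vadd_eq_add, Prod.fst_add, Prod.smul_fst, Prod.fst_sub, smul_eq_mul]
          field_simp
          linear_combination (B.2 - A.2) * hC1 + (A.2 - C.2) * h1
        · simp only [vadd_eq_add, Prod.snd_add, Prod.smul_snd, Prod.snd_sub, smul_eq_mul]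
          field_simp
          ring
      · refine ⟨(C.1 - A.1) / (B.1 - A.1), ?_⟩
        rw [h']
        apply Prod.ext
        · simp only [vadd_eq_add, Prod.fst_add, Prod.smul_fst, Prod.fst_sub, smul_eq_mul]
          field_simp
          ring
        · simp only [vadd_eq_add, Prod.snd_add, Prod.smul_snd, Prod.snd_sub, smul_eq_mul]
          field_simp
          linear_combination hc

/-- Generalized Routh configuration with x=y=z=1/2, u=v=w=4. -/
theorem generalized_routh_xhalf_u4 (A B C Ax Au Bv By Cw Cz P Q R : ℝ × ℝ)
    (hABC : ¬ Collinear ℝ ({A, B, C} : Set (ℝ × ℝ)))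
    (hAx : Ax - B = (1/2 : ℝ) • (C - Ax)) (hAu : Au - B = (4 : ℝ) • (C - Au))
    (hBy : By - C = (1/2 : ℝ) • (A - By)) (hBv : Bv - C = (4 : ℝ) • (A - Bv))
    (hCz : Cz - A = (1/2 : ℝ) • (B - Cz)) (hCw : Cw - A = (4 : ℝ) • (B - Cw))
    (hP1 : onLine P A Ax) (hP2 : onLine P B Bv)
    (hQ1 : onLine Q B By) (hQ2 : onLine Q C Cw)
    (hR1 : onLine R C Cz) (hR2 : onLine R A Au) :
    |signedArea P Q R| = (1/7 : ℝ) * |signedArea A B C| := by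
  obtain ⟨s1, hs1⟩ := onLine_exists hP1
  obtain ⟨t1, ht1⟩ := onLine_exists hP2
  obtain ⟨s2, hs2⟩ := onLine_exists hQ1
  obtain ⟨t2, ht2⟩ := onLine_exists hQ2
  obtain ⟨s3, hs3⟩ := onLine_exists hR1
  obtain ⟨t3, ht3⟩ := onLine_exists hR2
  obtain ⟨hAx1, hAx2⟩ := Prod.ext_iff.mp hAx
  obtain ⟨hAu1, hAu2⟩ := Prod.ext_iff.mp hAu
  obtain ⟨hBy1, hBy2⟩ := Prod.ext_iff.mp hBy
  obtain ⟨hBv1, hBv2⟩ := Prod.ext_iff.mp hBv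
  obtain ⟨hCz1, hCz2⟩ := Prod.ext_iff.mp hCz
  obtain ⟨hCw1, hCw2⟩ := Prod.ext_iff.mp hCw
  simp only [Prod.fst_sub, Prod.snd_sub, Prod.smul_fst, Prod.smul_snd, smul_eq_mul]
    at hAx1 hAx2 hAu1 hAu2 hBy1 hBy2 hBv1 hBv2 hCz1 hCz2 hCw1 hCw2
  -- explicit coordinates of the cevian points
  have hAxv1 : Ax.1 = (2 * B.1 + C.1) / 3 := by linarith
  have hAxv2 : Ax.2 = (2 * B.2 + C.2) / 3 := by linarith
  have hAuv1 : Au.1 = (B.1 + 4 * C.1) / 5 := by linarith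
  have hAuv2 : Au.2 = (B.2 + 4 * C.2) / 5 := by linarith
  have hByv1 : By.1 = (2 * C.1 + A.1) / 3 := by linarith
  have hByv2 : By.2 = (2 * C.2 + A.2) / 3 := by linarith
  have hBvv1 : Bv.1 = (C.1 + 4 * A.1) / 5 := by linarith
  have hBvv2 : Bv.2 = (C.2 + 4 * A.2) / 5 := by linarith
  have hCzv1 : Cz.1 = (2 * A.1 + B.1) / 3 := by linarith
  have hCzv2 : Cz.2 = (2 * A.2 + B.2) / 3 := by linarith
  have hCwv1 : Cw.1 = (A.1 + 4 * B.1) / 5 := by linarith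
  have hCwv2 : Cw.2 = (A.2 + 4 * B.2) / 5 := by linarith
  obtain ⟨hP11, hP12⟩ := Prod.ext_iff.mp hs1
  obtain ⟨hP21, hP22⟩ := Prod.ext_iff.mp ht1
  obtain ⟨hQ11, hQ12⟩ := Prod.ext_iff.mp hs2
  obtain ⟨hQ21, hQ22⟩ := Prod.ext_iff.mp ht2
  obtain ⟨hR11, hR12⟩ := Prod.ext_iff.mp hs3
  obtain ⟨hR21, hR22⟩ := Prod.ext_iff.mp ht3
  simp only [Prod.fst_add, Prod.snd_add, Prod.fst_sub, Prod.snd_sub, Prod.smul_fst,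
    Prod.smul_snd, smul_eq_mul] at hP11 hP12 hP21 hP22 hQ11 hQ12 hQ21 hQ22 hR11 hR12 hR21 hR22
  rw [hAxv1] at hP11; rw [hAxv2] at hP12
  rw [hBvv1] at hP21; rw [hBvv2] at hP22
  rw [hByv1] at hQ11; rw [hByv2] at hQ12
  rw [hCwv1] at hQ21; rw [hCwv2] at hQ22
  rw [hCzv1] at hR11; rw [hCzv2] at hR12
  rw [hAuv1] at hR21; rw [hAuv2] at hR22
  have hcross : (B.1 - A.1) * (C.2 - A.2) - (C.1 - A.1) * (B.2 - A.2) ≠ 0 := cross_ne hABC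
  have hPα : (2/3 * s1 - 1 + t1) * (B.1 - A.1) + (s1/3 - t1/5) * (C.1 - A.1) = 0 := by
    linear_combination hP21 - hP11
  have hPβ : (2/3 * s1 - 1 + t1) * (B.2 - A.2) + (s1/3 - t1/5) * (C.2 - A.2) = 0 := by
    linear_combination hP22 - hP12
  obtain ⟨hs1a, hs1b⟩ := indep_aux hcross hPα hPβ
  have hs1v : s1 = 3/7 := by linear_combination (3/7 : ℝ) * hs1a + (15/7 : ℝ) * hs1b
  have hQα : (1 - s2 - 4/5 * t2) * (B.1 - A.1) + (2/3 * s2 - 1 + t2) * (C.1 - A.1) = 0 := by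
    linear_combination hQ21 - hQ11
  have hQβ : (1 - s2 - 4/5 * t2) * (B.2 - A.2) + (2/3 * s2 - 1 + t2) * (C.2 - A.2) = 0 := by
    linear_combination hQ22 - hQ12
  obtain ⟨hs2a, hs2b⟩ := indep_aux hcross hQα hQβ
  have hs2v : s2 = 3/7 := by linear_combination (-15/7 : ℝ) * hs2a + (-12/7 : ℝ) * hs2b
  have hRα : (s3/3 - t3/5) * (B.1 - A.1) + (1 - s3 - 4/5 * t3) * (C.1 - A.1) = 0 := by
    linear_combination hR21 - hR11
  have hRβ : (s3/3 - t3/5) * (B.2 - A.2) + (1 - s3 - 4/5 * t3) * (C.2 - A.2) = 0 := by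
    linear_combination hR22 - hR12
  obtain ⟨hs3a, hs3b⟩ := indep_aux hcross hRα hRβ
  have hs3v : s3 = 3/7 := by linear_combination (12/7 : ℝ) * hs3a + (-3/7 : ℝ) * hs3b
  rw [hs1v] at hP11 hP12
  rw [hs2v] at hQ11 hQ12
  rw [hs3v] at hR11 hR12
  have harea : signedArea P Q R = (1/7 : ℝ) * signedArea A B C := by
    unfold signedArea
    rw [hP11, hP12, hQ11, hQ12, hR11, hR12]
    ring
  rw [harea, abs_mul]
  norm_num
end

section
/- In Routh's configuration with x=7, y=6, z=3, the Routh triangle PQR has area equal to 1/2 of the area of triangle ABC. -/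
lemma solve_aux (u1 u2 v1 v2 a b : ℝ) (hd : u1 * v2 - u2 * v1 ≠ 0)
    (h1 : a * u1 + b * v1 = 0) (h2 : a * u2 + b * v2 = 0) : a = 0 ∧ b = 0 := by
  constructor
  · have h : a * (u1 * v2 - u2 * v1) = 0 := by linear_combination v2 * h1 - v1 * h2
    exact (mul_eq_zero.mp h).resolve_right hd
  · have h : b * (u1 * v2 - u2 * v1) = 0 := by linear_combination (-u2) * h1 + u1 * h2
    exact (mul_eq_zero.mp h).resolve_right hd

lemma det_ne_zero (A B C : ℝ × ℝ) (h : ¬ Collinear ℝ ({A, B, C} : Set (ℝ × ℝ))) :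
    (B.1 - A.1) * (C.2 - A.2) - (B.2 - A.2) * (C.1 - A.1) ≠ 0 := by
  intro hd
  apply h
  by_cases hBA : B = A
  · subst hBA
    have he : ({B, B, C} : Set (ℝ × ℝ)) = {B, C} := by simp
    rw [he]; exact collinear_pair ℝ B C
  · rw [collinear_iff_of_mem (Set.mem_insert A {B, C})]
    refine ⟨B - A, ?_⟩
    intro p hp
    rcases hp with rfl | rfl | hp
    · exact ⟨0, by simp⟩
    · refine ⟨1, ?_⟩
      rw [Prod.ext_iff]
      constructor <;> simp [vadd_eq_add]
    · simp only [Set.mem_singleton_iff] at hp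
      rw [hp]
      have hu : B.1 - A.1 ≠ 0 ∨ B.2 - A.2 ≠ 0 := by
        by_contra hc
        push_neg at hc
        exact hBA (Prod.ext (by linarith [hc.1]) (by linarith [hc.2]))
      rcases hu with hu | hu
      · refine ⟨(C.1 - A.1) / (B.1 - A.1), ?_⟩
        rw [Prod.ext_iff]
        constructor <;> simp only [vadd_eq_add, Prod.fst_add, Prod.snd_add,
          Prod.smul_fst, Prod.smul_snd, Prod.fst_sub, Prod.snd_sub, smul_eq_mul]
        · field_simp
          ring
        · have h2 : (C.1 - A.1) / (B.1 - A.1) * (B.2 - A.2) = C.2 - A.2 := by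
            rw [div_mul_eq_mul_div, div_eq_iff hu]
            linear_combination -hd
          linarith [h2]
      · refine ⟨(C.2 - A.2) / (B.2 - A.2), ?_⟩
        rw [Prod.ext_iff]
        constructor <;> simp only [vadd_eq_add, Prod.fst_add, Prod.snd_add,
          Prod.smul_fst, Prod.smul_snd, Prod.fst_sub, Prod.snd_sub, smul_eq_mul]
        · have h1 : (C.2 - A.2) / (B.2 - A.2) * (B.1 - A.1) = C.1 - A.1 := by
            rw [div_mul_eq_mul_div, div_eq_iff hu]
            linear_combination hd
          linarith [h1]
        · field_simp
          ring

set_option maxHeartbeats 1000000 in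
/-- Routh's configuration with x=7, y=6, z=3. -/
theorem routh_7_6_3 (A B C Ax By Cz P Q R : ℝ × ℝ)
    (hABC : ¬ Collinear ℝ ({A, B, C} : Set (ℝ × ℝ)))
    (hAx : Ax - B = (7 : ℝ) • (C - Ax))
    (hBy : By - C = (6 : ℝ) • (A - By))
    (hCz : Cz - A = (3 : ℝ) • (B - Cz))
    (hP1 : onLine P A Ax) (hP2 : onLine P B By)
    (hQ1 : onLine Q B By) (hQ2 : onLine Q C Cz)
    (hR1 : onLine R C Cz) (hR2 : onLine R A Ax) :
    |signedArea P Q R| = (1/2 : ℝ) * |signedArea A B C| := by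
  have hd := det_ne_zero A B C hABC
  -- component equations for Ax, By, Cz
  have hAx1 : Ax.1 - B.1 = 7 * (C.1 - Ax.1) := by simpa using congrArg Prod.fst hAx
  have hAx2 : Ax.2 - B.2 = 7 * (C.2 - Ax.2) := by simpa using congrArg Prod.snd hAx
  have hBy1 : By.1 - C.1 = 6 * (A.1 - By.1) := by simpa using congrArg Prod.fst hBy
  have hBy2 : By.2 - C.2 = 6 * (A.2 - By.2) := by simpa using congrArg Prod.snd hBy
  have hCz1 : Cz.1 - A.1 = 3 * (B.1 - Cz.1) := by simpa using congrArg Prod.fst hCz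
  have hCz2 : Cz.2 - A.2 = 3 * (B.2 - Cz.2) := by simpa using congrArg Prod.snd hCz
  have hP1' : (P -ᵥ A) +ᵥ A ∈ line[ℝ, A, Ax] := by rw [vsub_vadd]; exact hP1
  obtain ⟨t1, ht1⟩ := (vadd_left_mem_affineSpan_pair (k := ℝ)).1 hP1'
  have hP2' : (P -ᵥ B) +ᵥ B ∈ line[ℝ, B, By] := by rw [vsub_vadd]; exact hP2
  obtain ⟨t2, ht2⟩ := (vadd_left_mem_affineSpan_pair (k := ℝ)).1 hP2'
  have hQ1' : (Q -ᵥ B) +ᵥ B ∈ line[ℝ, B, By] := by rw [vsub_vadd]; exact hQ1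
  obtain ⟨t3, ht3⟩ := (vadd_left_mem_affineSpan_pair (k := ℝ)).1 hQ1'
  have hQ2' : (Q -ᵥ C) +ᵥ C ∈ line[ℝ, C, Cz] := by rw [vsub_vadd]; exact hQ2
  obtain ⟨t4, ht4⟩ := (vadd_left_mem_affineSpan_pair (k := ℝ)).1 hQ2'
  have hR1' : (R -ᵥ C) +ᵥ C ∈ line[ℝ, C, Cz] := by rw [vsub_vadd]; exact hR1
  obtain ⟨t5, ht5⟩ := (vadd_left_mem_affineSpan_pair (k := ℝ)).1 hR1'
  have hR2' : (R -ᵥ A) +ᵥ A ∈ line[ℝ, A, Ax] := by rw [vsub_vadd]; exact hR2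
  obtain ⟨t6, ht6⟩ := (vadd_left_mem_affineSpan_pair (k := ℝ)).1 hR2'
  have e11 : t1 * (Ax.1 - A.1) = P.1 - A.1 := by
    simpa using congrArg Prod.fst ht1
  have e12 : t1 * (Ax.2 - A.2) = P.2 - A.2 := by
    simpa using congrArg Prod.snd ht1
  have e21 : t2 * (By.1 - B.1) = P.1 - B.1 := by
    simpa using congrArg Prod.fst ht2
  have e22 : t2 * (By.2 - B.2) = P.2 - B.2 := by
    simpa using congrArg Prod.snd ht2
  have e31 : t3 * (By.1 - B.1) = Q.1 - B.1 := by
    simpa using congrArg Prod.fst ht3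
  have e32 : t3 * (By.2 - B.2) = Q.2 - B.2 := by
    simpa using congrArg Prod.snd ht3
  have e41 : t4 * (Cz.1 - C.1) = Q.1 - C.1 := by
    simpa using congrArg Prod.fst ht4
  have e42 : t4 * (Cz.2 - C.2) = Q.2 - C.2 := by
    simpa using congrArg Prod.snd ht4
  have e51 : t5 * (Cz.1 - C.1) = R.1 - C.1 := by
    simpa using congrArg Prod.fst ht5
  have e52 : t5 * (Cz.2 - C.2) = R.2 - C.2 := by
    simpa using congrArg Prod.snd ht5
  have e61 : t6 * (Ax.1 - A.1) = R.1 - A.1 := by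
    simpa using congrArg Prod.fst ht6
  have e62 : t6 * (Ax.2 - A.2) = R.2 - A.2 := by
    simpa using congrArg Prod.snd ht6
  -- P: (t1/8 - 1 + t2) u + (7 t1/8 - t2/7) v = 0
  have hP := solve_aux (B.1 - A.1) (B.2 - A.2) (C.1 - A.1) (C.2 - A.2) (t1/8 - 1 + t2) (7*t1/8 - t2/7) hd
    (by linear_combination e11 - e21 - t1/8 * hAx1 + t2/7 * hBy1)
    (by linear_combination e12 - e22 - t1/8 * hAx2 + t2/7 * hBy2)
  have hQ := solve_aux (B.1 - A.1) (B.2 - A.2) (C.1 - A.1) (C.2 - A.2) (1 - t3 - 3*t4/4) (t3/7 - 1 + t4) hd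
    (by linear_combination e31 - e41 - t3/7 * hBy1 + t4/4 * hCz1)
    (by linear_combination e32 - e42 - t3/7 * hBy2 + t4/4 * hCz2)
  have hR := solve_aux (B.1 - A.1) (B.2 - A.2) (C.1 - A.1) (C.2 - A.2) (3*t5/4 - t6/8) (1 - t5 - 7*t6/8) hd
    (by linear_combination e51 - e61 - t5/4 * hCz1 + t6/8 * hAx1)
    (by linear_combination e52 - e62 - t5/4 * hCz2 + t6/8 * hAx2)
  have ht1v : t1 = 4/25 := by obtain ⟨h1, h2⟩ := hP; linarith
  have ht3v : t3 = 7/25 := by obtain ⟨h1, h2⟩ := hQ; linarith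
  have ht5v : t5 = 4/25 := by obtain ⟨h1, h2⟩ := hR; linarith
  subst ht1v ht3v ht5v
  have p1 : P.1 = (21/25)*A.1 + (1/50)*B.1 + (7/50)*C.1 := by linarith
  have p2 : P.2 = (21/25)*A.2 + (1/50)*B.2 + (7/50)*C.2 := by linarith
  have q1 : Q.1 = (6/25)*A.1 + (18/25)*B.1 + (1/25)*C.1 := by linarith
  have q2 : Q.2 = (6/25)*A.2 + (18/25)*B.2 + (1/25)*C.2 := by linarith
  have r1 : R.1 = (1/25)*A.1 + (3/25)*B.1 + (21/25)*C.1 := by linarith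
  have r2 : R.2 = (1/25)*A.2 + (3/25)*B.2 + (21/25)*C.2 := by linarith
  have key : signedArea P Q R = (1/2 : ℝ) * signedArea A B C := by
    simp only [signedArea]
    rw [p1, p2, q1, q2, r1, r2]
    ring
  rw [key, abs_mul]
  norm_num
end
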